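/- Fix n ≥ 2, l ≥ 1 and K = (k_i) ∈ 𝒦_l. A sequence h = (h_i) ∈ {0,1,…,l}^ℕ belongs to the spectrum Sp_K if and only if both of the following hold: (i) h_i + h_{i+1} + ⋯ + h_{i+n−1} ≥ l for every i ≥ 1, and (ii) h ≈ K. -/

import Mathlib

/-!
Statement 5 (Theorem "speccondition"): characterization of the spectrum `Sp_K`.
Paths are encoded as in Statement 2 (0-indexed everywhere).
-/

def H1 (a b : ℕ) : ℕ := if a < b then 0 else 1

noncomputable def Hl (l : ℕ) (a b : ℕ → ℕ) : ℕ :=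
  Finset.univ.inf' ⟨1, Finset.mem_univ _⟩
    (fun σ : Equiv.Perm (Fin l) => ∑ i : Fin l, H1 (a i) (b (σ i)))

def IsBRow (n l : ℕ) (a : ℕ → ℕ) : Prop :=
  (∀ k, k + 1 < l → a k ≤ a (k + 1)) ∧ (∀ k, k < l → 1 ≤ a k ∧ a k ≤ n) ∧
    (∀ k, l ≤ k → a k = 0)

def IsPath (n l : ℕ) (s : ℕ → ℕ → ℕ) : Prop := ∀ i, IsBRow n l (s i)

noncomputable def locEnergy (l : ℕ) (s : ℕ → ℕ → ℕ) : ℕ → ℕ :=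
  fun i => Hl l (s (i + 1)) (s i)

/-- `K ∈ 𝒦_l`: an `n`-periodic sequence of nonnegative integers with
`k_1 + ⋯ + k_n = l` (0-indexed). -/
def IsKseq (n l : ℕ) (K : ℕ → ℕ) : Prop :=
  (∀ i, K (i + n) = K i) ∧ (∑ i ∈ Finset.range n, K i = l)

/-- partial sums `k_i + k_{i+1} + ⋯ + k_{i+a-1}`. -/
def Psum (K : ℕ → ℕ) (i a : ℕ) : ℕ := ∑ j ∈ Finset.range a, K (i + j)

/-- the ground-state path `s^{(K)}`: row `i` consists of `k_i` entries `1`,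
`k_{i+1}` entries `2`, …, `k_{i+n-1}` entries `n`. -/
def gsPath (n l : ℕ) (K : ℕ → ℕ) : ℕ → ℕ → ℕ :=
  fun i k => if k < l then
      1 + ((Finset.range n).filter (fun a => Psum K i (a + 1) ≤ k)).card
    else 0

/-- `a ≈ b`: the sequences differ in only finitely many places. -/
def FinDiff {α : Type*} (a b : ℕ → α) : Prop := ({i | a i ≠ b i}).Finite

/-- the spectrum `Sp_K = ρ(S_K)`. -/
def SpSet (n l : ℕ) (K : ℕ → ℕ) : Set (ℕ → ℕ) :=
  {h | ∃ s : ℕ → ℕ → ℕ, IsPath n l s ∧ FinDiff s (gsPath n l K) ∧ locEnergy l s = h}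

section Aux
/-- number of entries among the first `l` that are `≥ c`. -/
def cnt (l c : ℕ) (a : ℕ → ℕ) : ℕ := ((Finset.range l).filter (fun k => c ≤ a k)).card

lemma cnt_eq_fin (l c : ℕ) (a : ℕ → ℕ) :
    cnt l c a = (Finset.univ.filter (fun i : Fin l => c ≤ a i.val)).card := by
  rw [cnt, Finset.card_filter, Finset.card_filter,
    ← Fin.sum_univ_eq_sum_range (fun k => if c ≤ a k then 1 else 0) l]

lemma H1_one {a b : ℕ} (hab : b ≤ a) : H1 a b = 1 := by
  simp [H1, Nat.not_lt.mpr hab]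

lemma H1_le (a b : ℕ) : H1 a b ≤ 1 := by
  unfold H1; split <;> omega

/-- Key lower bound: for every permutation `σ`,
`#{i : a i ≥ c} ≤ Σ H1 + #{j : b j ≥ c+1}`. -/
lemma cnt_le_sum (l c : ℕ) (a b : ℕ → ℕ) (σ : Equiv.Perm (Fin l)) :
    cnt l c a ≤ (∑ i : Fin l, H1 (a i.val) (b ((σ i).val))) + cnt l (c + 1) b := by
  classical
  rw [cnt_eq_fin, cnt_eq_fin]
  set A : Finset (Fin l) := Finset.univ.filter (fun i => c ≤ a i.val) with hA
  have hsplit := Finset.card_filter_add_card_filter_not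
    (s := A) (p := fun i => c + 1 ≤ b ((σ i).val))
  set A1 := A.filter (fun i => c + 1 ≤ b ((σ i).val)) with hA1
  set A2 := A.filter (fun i => ¬ c + 1 ≤ b ((σ i).val)) with hA2
  have h1 : A1.card ≤ (Finset.univ.filter (fun j : Fin l => c + 1 ≤ b j.val)).card := by
    apply Finset.card_le_card_of_injOn σ
    · intro i hi
      simp only [hA1, Finset.mem_coe, Finset.mem_filter] at hi ⊢
      exact ⟨Finset.mem_univ _, hi.2⟩
    · exact fun x _ y _ hxy => σ.injective hxy
  have h2 : A2.card ≤ ∑ i : Fin l, H1 (a i.val) (b ((σ i).val)) := by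
    calc A2.card = ∑ i ∈ A2, 1 := by simp
    _ ≤ ∑ i ∈ A2, H1 (a i.val) (b ((σ i).val)) := by
        apply Finset.sum_le_sum
        intro i hi
        simp only [hA2, hA, Finset.mem_filter] at hi
        rw [H1_one (by omega)]
    _ ≤ ∑ i : Fin l, H1 (a i.val) (b ((σ i).val)) :=
        Finset.sum_le_sum_of_subset (Finset.subset_univ _)
  omega

lemma cnt_le_Hl (l c : ℕ) (a b : ℕ → ℕ) :
    cnt l c a ≤ Hl l a b + cnt l (c + 1) b := by
  obtain ⟨σ, -, hσ⟩ := Finset.exists_mem_eq_inf' (⟨1, Finset.mem_univ _⟩ :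
    (Finset.univ : Finset (Equiv.Perm (Fin l))).Nonempty)
    (fun σ : Equiv.Perm (Fin l) => ∑ i : Fin l, H1 (a i) (b (σ i)))
  rw [Hl, hσ]
  exact cnt_le_sum l c a b σ

lemma Hl_le (l : ℕ) (a b : ℕ → ℕ) (σ : Equiv.Perm (Fin l)) :
    Hl l a b ≤ ∑ i : Fin l, H1 (a i.val) (b ((σ i).val)) :=
  Finset.inf'_le _ (Finset.mem_univ σ)

lemma psum_mono (K : ℕ → ℕ) (i : ℕ) {a b : ℕ} (hab : a ≤ b) : Psum K i a ≤ Psum K i b :=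
  Finset.sum_le_sum_of_subset (Finset.range_subset_range.mpr hab)

lemma psum_succ_left (K : ℕ → ℕ) (i a : ℕ) :
    Psum K i (a + 1) = K i + Psum K (i + 1) a := by
  rw [Psum, Finset.sum_range_succ']
  simp only [Psum, add_comm]
  congr 1
  apply Finset.sum_congr rfl
  intro j _
  ring_nf

lemma psum_one (K : ℕ → ℕ) (i : ℕ) : Psum K i 1 = K i := by simp [Psum]

/-- characterization of the entries of a ground-state row. -/
lemma gs_ge_iff (n l : ℕ) (K : ℕ → ℕ) (i : ℕ) {k m : ℕ} (hk : k < l) (hm : m ≤ n) :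
    m + 1 ≤ gsPath n l K i k ↔ Psum K i m ≤ k := by
  rw [gsPath, if_pos hk]
  have hcard : m ≤ ((Finset.range n).filter (fun a => Psum K i (a + 1) ≤ k)).card
      ↔ Psum K i m ≤ k := by
    constructor
    · intro hc
      rcases Nat.eq_zero_or_pos m with rfl | hm0
      · simp [Psum]
      by_contra hP
      have hsub : (Finset.range n).filter (fun a => Psum K i (a + 1) ≤ k)
          ⊆ Finset.range (m - 1) := by
        intro a ha
        simp only [Finset.mem_filter, Finset.mem_range] at ha ⊢
        by_contra ham
        exact hP (le_trans (psum_mono K i (by omega)) ha.2)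
      have := Finset.card_le_card hsub
      simp only [Finset.card_range] at this
      omega
    · intro hP
      have hsub : Finset.range m ⊆ (Finset.range n).filter (fun a => Psum K i (a + 1) ≤ k) := by
        intro a ha
        simp only [Finset.mem_range] at ha
        simp only [Finset.mem_filter, Finset.mem_range]
        exact ⟨by omega, le_trans (psum_mono K i (by omega)) hP⟩
      have := Finset.card_le_card hsub
      simpa using this
  omega

/-- counting entries `≥ c+1` in a ground-state row. -/
lemma cnt_gs (n l : ℕ) (K : ℕ → ℕ) (i : ℕ) {c : ℕ} (hc : c ≤ n) :
    cnt l (c + 1) (gsPath n l K i) = l - Psum K i c := by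
  rw [cnt]
  have : (Finset.range l).filter (fun k => c + 1 ≤ gsPath n l K i k)
      = Finset.Ico (Psum K i c) l := by
    ext k
    simp only [Finset.mem_filter, Finset.mem_range, Finset.mem_Ico]
    constructor
    · rintro ⟨hk, hge⟩
      exact ⟨(gs_ge_iff n l K i hk hc).mp hge, hk⟩
    · rintro ⟨hP, hk⟩
      exact ⟨hk, (gs_ge_iff n l K i hk hc).mpr hP⟩
  rw [this, Nat.card_Ico]

variable (n l : ℕ) (h : ℕ → ℕ)

/-- the window-sum condition (i). -/
def WinCond : Prop := ∀ i : ℕ, l ≤ ∑ j ∈ Finset.range n, h (i + j)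

lemma wincond_psum (hw : WinCond n l h) (i : ℕ) : l ≤ Psum h i n := hw i

lemma gsPath_isBRow (hn : 1 ≤ n) (hw : WinCond n l h) (i : ℕ) :
    IsBRow n l (gsPath n l h i) := by
  refine ⟨?_, ?_, ?_⟩
  · intro k hk
    simp only [gsPath, if_pos (by omega : k < l), if_pos (by omega : k + 1 < l)]
    have : (Finset.range n).filter (fun a => Psum h i (a + 1) ≤ k)
        ⊆ (Finset.range n).filter (fun a => Psum h i (a + 1) ≤ k + 1) := by
      intro a ha
      simp only [Finset.mem_filter] at ha ⊢
      exact ⟨ha.1, by omega⟩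
    have := Finset.card_le_card this
    omega
  · intro k hk
    constructor
    · simp only [gsPath, if_pos hk]; omega
    · simp only [gsPath, if_pos hk]
      by_contra hcon
      have hcard : n ≤ ((Finset.range n).filter (fun a => Psum h i (a + 1) ≤ k)).card := by
        omega
      have heq : (Finset.range n).filter (fun a => Psum h i (a + 1) ≤ k) = Finset.range n :=
        Finset.eq_of_subset_of_card_le (Finset.filter_subset _ _) (by simpa using hcard)
      have hmem : n - 1 ∈ (Finset.range n).filter (fun a => Psum h i (a + 1) ≤ k) := by
        rw [heq]; simp only [Finset.mem_range]; omega
      simp only [Finset.mem_filter] at hmem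
      have : Psum h i n ≤ k := by
        have : n - 1 + 1 = n := by omega
        rw [← this]; exact hmem.2
      have := wincond_psum n l h hw i
      omega
  · intro k hk
    simp [gsPath, Nat.not_lt.mpr hk]

open Fin.NatCast in
/-- core: the local energy of the path built from `h` is `h` itself. -/
lemma energy_gsPath (hn : 1 ≤ n) (hl : 1 ≤ l) (hw : WinCond n l h)
    (hhl : ∀ i, h i ≤ l) (i : ℕ) :
    Hl l (gsPath n l h (i + 1)) (gsPath n l h i) = h i := by
  haveI : NeZero l := ⟨by omega⟩
  have hlow : h i ≤ Hl l (gsPath n l h (i + 1)) (gsPath n l h i) := by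
    have h1 := cnt_le_Hl l 1 (gsPath n l h (i + 1)) (gsPath n l h i)
    have e1 : cnt l 1 (gsPath n l h (i + 1)) = l := by
      have := cnt_gs n l h (i + 1) (c := 0) (by omega)
      simpa [Psum] using this
    have e2 : cnt l (1 + 1) (gsPath n l h i) = l - h i := by
      have := cnt_gs n l h i (c := 1) hn
      rwa [psum_one] at this
    have := hhl i
    omega
  have hupp : Hl l (gsPath n l h (i + 1)) (gsPath n l h i) ≤ h i := by
    -- use the translation permutation j ↦ j + h i (mod l)
    set σ : Equiv.Perm (Fin l) := Equiv.addRight ((h i : Fin l)) with hσ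
    refine le_trans (Hl_le l _ _ σ) ?_
    have hbound : ∀ j : Fin l, H1 (gsPath n l h (i + 1) j.val) (gsPath n l h i ((σ j).val))
        ≤ if j.val + h i < l then 0 else 1 := by
      intro j
      split
      · next hjl =>
        have hσj : (σ j).val = j.val + h i := by
          have hhi : h i < l := by omega
          simp only [hσ, Equiv.coe_addRight, Fin.add_def, Fin.val_natCast,
            Nat.mod_eq_of_lt hhi]
          exact Nat.mod_eq_of_lt (by omega)
        set v := gsPath n l h (i + 1) j.val with hv
        have hv1 : 1 ≤ v := by simp only [hv, gsPath, if_pos j.isLt]; omega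
        have hvn : v ≤ n := (by
          have := gsPath_isBRow n l h hn hw (i + 1)
          exact (this.2.1 j.val j.isLt).2)
        have hPv : Psum h (i + 1) (v - 1) ≤ j.val := by
          have : (v - 1) + 1 ≤ gsPath n l h (i + 1) j.val := by omega
          exact (gs_ge_iff n l h (i + 1) j.isLt (by omega)).mp this
        have hlt : v + 1 ≤ gsPath n l h i ((σ j).val) := by
          rw [hσj]
          apply (gs_ge_iff n l h i (by omega) hvn).mpr
          have h3 := psum_succ_left h i (v - 1)
          rw [Nat.sub_add_cancel hv1] at h3
          omega
        have : gsPath n l h (i + 1) j.val < gsPath n l h i ((σ j).val) := by omega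
        simp [H1, show v < gsPath n l h i ((σ j).val) by omega]
      · unfold H1; split <;> omega
    calc (∑ j : Fin l, H1 (gsPath n l h (i + 1) j.val) (gsPath n l h i ((σ j).val)))
        ≤ ∑ j : Fin l, (if j.val + h i < l then 0 else 1) := Finset.sum_le_sum
          (fun j _ => hbound j)
      _ = ∑ k ∈ Finset.range l, (if k + h i < l then 0 else 1) :=
          Fin.sum_univ_eq_sum_range (fun k => if k + h i < l then 0 else 1) l
      _ = ((Finset.range l).filter (fun k => ¬ (k + h i < l))).card := by
          rw [Finset.card_filter]
          apply Finset.sum_congr rfl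
          intro k _
          split <;> simp_all
      _ ≤ h i := by
          have : (Finset.range l).filter (fun k => ¬ (k + h i < l))
              = Finset.Ico (l - h i) l := by
            ext k
            simp only [Finset.mem_filter, Finset.mem_range, Finset.mem_Ico]
            omega
          rw [this, Nat.card_Ico]
          omega
  omega

lemma Ksum (n l : ℕ) (K : ℕ → ℕ) (hn : 1 ≤ n) (hK : IsKseq n l K) (i : ℕ) :
    ∑ j ∈ Finset.range n, K (i + j) = l := by
  induction i with
  | zero => simpa using hK.2
  | succ i ih =>
    obtain ⟨m, rfl⟩ : ∃ m, n = m + 1 := ⟨n - 1, by omega⟩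
    have e1 : ∑ j ∈ Finset.range (m + 1), K (i + j)
        = (∑ j ∈ Finset.range m, K (i + (j + 1))) + K (i + 0) := by
      rw [Finset.sum_range_succ' (fun j => K (i + j)) m]
    have e2 : ∑ j ∈ Finset.range (m + 1), K (i + 1 + j)
        = (∑ j ∈ Finset.range m, K (i + 1 + j)) + K (i + 1 + m) := by
      rw [Finset.sum_range_succ]
    have e3 : ∀ j, K (i + (j + 1)) = K (i + 1 + j) := by
      intro j; congr 1; omega
    have e4 : K (i + 1 + m) = K i := by
      have := hK.1 i
      have : K (i + (m + 1)) = K i := hK.1 i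
      rw [← this]; congr 1; omega
    have e5 : ∑ j ∈ Finset.range m, K (i + (j + 1)) = ∑ j ∈ Finset.range m, K (i + 1 + j) :=
      Finset.sum_congr rfl (fun j _ => e3 j)
    rw [e2, e4]
    simp only [add_zero] at e1
    omega

lemma K_le (n l : ℕ) (K : ℕ → ℕ) (hn : 1 ≤ n) (hK : IsKseq n l K) (i : ℕ) : K i ≤ l := by
  have := Ksum n l K hn hK i
  calc K i = K (i + 0) := by rw [add_zero]
    _ ≤ ∑ j ∈ Finset.range n, K (i + j) :=
        Finset.single_le_sum (f := fun j => K (i + j)) (fun _ _ => Nat.zero_le _)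
          (Finset.mem_range.mpr hn)
    _ = l := this

lemma cnt_one_row (n l : ℕ) (a : ℕ → ℕ) (ha : IsBRow n l a) : cnt l 1 a = l := by
  rw [cnt, Finset.filter_true_of_mem, Finset.card_range]
  intro k hk
  exact (ha.2.1 k (Finset.mem_range.mp hk)).1

lemma cnt_top_row (n l : ℕ) (a : ℕ → ℕ) (ha : IsBRow n l a) : cnt l (n + 1) a = 0 := by
  rw [cnt, Finset.card_eq_zero, Finset.filter_false_of_mem]
  intro k hk
  have := (ha.2.1 k (Finset.mem_range.mp hk)).2
  omega

lemma telescope (n l : ℕ) (s : ℕ → ℕ → ℕ) (h : ℕ → ℕ)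
    (hloc : locEnergy l s = h) (i : ℕ) :
    ∀ m, m ≤ n → cnt l (n + 1 - m) (s (i + m)) ≤
      (∑ j ∈ Finset.range m, h (i + j)) + cnt l (n + 1) (s i) := by
  intro m
  induction m with
  | zero => intro _; simp
  | succ m ih =>
    intro hm
    have ihm := ih (by omega)
    have hc : cnt l (n - m) (s (i + m + 1)) ≤
        Hl l (s (i + m + 1)) (s (i + m)) + cnt l (n - m + 1) (s (i + m)) :=
      cnt_le_Hl l (n - m) _ _
    have hE : Hl l (s (i + m + 1)) (s (i + m)) = h (i + m) := by
      have := congrFun hloc (i + m)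
      simpa [locEnergy] using this
    have e1 : n + 1 - (m + 1) = n - m := by omega
    have e2 : n - m + 1 = n + 1 - m := by omega
    have e3 : i + (m + 1) = i + m + 1 := by omega
    rw [e1, e3, Finset.sum_range_succ]
    rw [hE, e2] at hc
    omega

lemma gsPath_congr (n l : ℕ) (h K : ℕ → ℕ) (i : ℕ) (hhK : ∀ j, h (i + j) = K (i + j)) :
    gsPath n l h i = gsPath n l K i := by
  funext k
  have : ∀ a, Psum h i a = Psum K i a := by
    intro a
    exact Finset.sum_congr rfl (fun j _ => hhK j)
  simp only [gsPath, this]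

end Aux

/-- For `h ∈ {0,…,l}^ℕ`, `h ∈ Sp_K` iff
(i) `h_i + h_{i+1} + ⋯ + h_{i+n-1} ≥ l` for every `i`, and (ii) `h ≈ K`. -/
theorem spectrum_characterization (n l : ℕ) (hn : 2 ≤ n) (hl : 1 ≤ l)
    (K : ℕ → ℕ) (hK : IsKseq n l K)
    (h : ℕ → ℕ) (hhl : ∀ i, h i ≤ l) :
    h ∈ SpSet n l K ↔
      ((∀ i : ℕ, l ≤ ∑ j ∈ Finset.range n, h (i + j)) ∧ FinDiff h K) := by
  have hn1 : 1 ≤ n := by omega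
  constructor
  · rintro ⟨s, hpath, hfd, hloc⟩
    constructor
    · intro i
      have ht := telescope n l s h hloc i n le_rfl
      have c1 : cnt l 1 (s (i + n)) = l := cnt_one_row n l _ (hpath (i + n))
      have c0 : cnt l (n + 1) (s i) = 0 := cnt_top_row n l _ (hpath i)
      have e : n + 1 - n = 1 := by omega
      rw [e, c1, c0] at ht
      omega
    · have hKw : WinCond n l K := fun i => le_of_eq (Ksum n l K hn1 hK i).symm
      have hKl : ∀ i, K i ≤ l := K_le n l K hn1 hK
      have hfd' : ({i | s i ≠ gsPath n l K i}).Finite := hfd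
      have hpre : ((· + 1) ⁻¹' {i | s i ≠ gsPath n l K i}).Finite :=
        hfd'.preimage (fun a _ b _ hab => by omega)
      have hsub : {i | h i ≠ K i} ⊆
          {i | s i ≠ gsPath n l K i} ∪ ((· + 1) ⁻¹' {i | s i ≠ gsPath n l K i}) := by
        intro i hi
        by_contra hcon
        simp only [Set.mem_union, Set.mem_preimage, Set.mem_setOf_eq, not_or,
          not_not] at hcon
        apply hi
        have hli := congrFun hloc i
        simp only [locEnergy] at hli
        rw [← hli, hcon.2, hcon.1]
        exact energy_gsPath n l K hn1 hl hKw hKl i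
      exact (hfd'.union hpre).subset hsub
  · rintro ⟨hwin, hfd⟩
    refine ⟨gsPath n l h, gsPath_isBRow n l h hn1 hwin, ?_, ?_⟩
    · have hfd' : ({i | h i ≠ K i}).Finite := hfd
      obtain ⟨N, hN⟩ := hfd'.bddAbove
      have hsub : {i | gsPath n l h i ≠ gsPath n l K i} ⊆ Set.Iic N := by
        intro i hi
        by_contra hcon
        simp only [Set.mem_Iic, not_le] at hcon
        apply hi
        apply gsPath_congr
        intro j
        by_contra hne
        have : i + j ≤ N := hN hne
        omega
      exact (Set.finite_Iic N).subset hsub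
    · funext i
      simp only [locEnergy]
      exact energy_gsPath n l h hn1 hl hwin hhl i
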